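/- Let β, x₁,…,x_d, b₁, b₂,… be independent indeterminates and work in the ring of formal power series over ℤ in these variables. For a = (a₁,…,a_d) ∈ ℤ^d with a_i + d - i ≥ 0 for every i, the two Jacobi–Trudi type determinants agree: det( Σ_{s≥0} C(i-d, s) β^s G^{(a_i+d-i)}_{a_i+j-i+s} )_{1≤i,j≤d} = det( Σ_{s≥0} C(i-j, s) β^s G^{(a_i+d-i)}_{a_i+j-i+s} )_{1≤i,j≤d}, where C(n,s) denotes the generalized binomial coefficient defined by (1+x)^n = Σ_{s≥0} C(n,s) x^s for n ∈ ℤ. -/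

import Mathlib

open scoped BigOperators

namespace GrothDet

/-- Index type for the indeterminates: `β`, `x₁,…,x_d`, `b₁,b₂,…`. -/
abbrev Idx (d : ℕ) := Unit ⊕ Fin d ⊕ ℕ

/-- The ambient ring: formal power series over `ℤ` in `β`, the `xᵢ` and the `bⱼ`. -/
abbrev R (d : ℕ) := MvPowerSeries (Idx d) ℤ

noncomputable def β (d : ℕ) : R d := MvPowerSeries.X (Sum.inl ())
noncomputable def x (d : ℕ) (i : Fin d) : R d := MvPowerSeries.X (Sum.inr (Sum.inl i))
noncomputable def b (d : ℕ) (ℓ : ℕ) : R d := MvPowerSeries.X (Sum.inr (Sum.inr ℓ))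

/-- `x ⊕ y := x + y + βxy`. -/
noncomputable def oplus (d : ℕ) (u v : R d) : R d := u + v + β d * u * v

/-- `[y|b]^k := (y ⊕ b₁)⋯(y ⊕ b_k)`. -/
noncomputable def fb (d : ℕ) (y : R d) (k : ℕ) : R d :=
  ∏ ℓ ∈ Finset.range k, oplus d y (b d ℓ)

/-- The multiplicative inverse of `1 + β * x j` (a unit since its constant term is `1`). -/
noncomputable def invOneAdd (d : ℕ) (j : Fin d) : R d :=
  MvPowerSeries.invOfUnit (1 + β d * x d j) 1

/-- `F^{(k)}(u) = ∏ᵢ (1+βxᵢ)/(1-xᵢu) · ∏_{ℓ=1}^k (1+(u+β)b_ℓ)` as a power series in `u`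
over `R d`; here `(1-xᵢu)⁻¹ = ∑_n xᵢⁿ uⁿ`. -/
noncomputable def F (d : ℕ) (k : ℕ) : PowerSeries (R d) :=
  (∏ i : Fin d,
      PowerSeries.C (1 + β d * x d i) * PowerSeries.mk fun n => x d i ^ n) *
    ∏ ℓ ∈ Finset.range k,
      (1 + (PowerSeries.X + PowerSeries.C (β d)) * PowerSeries.C (b d ℓ))

/-- `[u^t] F^{(k)}(u)`, extended by `0` in negative degrees `t`. -/
noncomputable def Fcoeff (d : ℕ) (k : ℕ) (t : ℤ) : R d :=
  if 0 ≤ t then PowerSeries.coeff t.toNat (F d k) else 0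

/-- The sum `∑_{s≥0} f s` of a family of power series such that `β^s ∣ f s`:
it is defined coefficientwise; on the coefficient of a monomial `n` only the
(finitely many) terms with `s ≤ n(β)` contribute, and the value is the limit of the
partial sums in the formal power series topology. -/
noncomputable def seriesSum (d : ℕ) (f : ℕ → R d) : R d :=
  (fun n => ∑ s ∈ Finset.range (n (Sum.inl ()) + 1), MvPowerSeries.coeff n (f s) :
    (Idx d →₀ ℕ) → ℤ)

/-- `G^{(k)}_m = ∑_{s≥0} (-β)^s [u^{m+s}] F^{(k)}(u)`. -/
noncomputable def G (d : ℕ) (k : ℕ) (m : ℤ) : R d :=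
  seriesSum d fun s => (-β d) ^ s * Fcoeff d k (m + s)

/-- The `p`-th elementary symmetric function of the family `f` restricted to `S`. -/
noncomputable def esym (d : ℕ) (S : Finset (Fin d)) (p : ℕ) (f : Fin d → R d) : R d :=
  ∑ t ∈ S.powersetCard p, ∏ i ∈ t, f i

/-- `x_i/(1+βx_i) = -x̄_i`. -/
noncomputable def xbar (d : ℕ) (i : Fin d) : R d := x d i * invOneAdd d i



section Aux

lemma coeff_beta_pow_mul (d r : ℕ) (g : R d) (n : Idx d →₀ ℕ) :
    MvPowerSeries.coeff n (β d ^ r * g)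
      = if r ≤ n (Sum.inl ()) then
          MvPowerSeries.coeff (n - Finsupp.single (Sum.inl ()) r) g else 0 := by
  rw [β, MvPowerSeries.X_pow_eq, MvPowerSeries.coeff_monomial_mul]
  simp [Finsupp.single_le_iff]

lemma coeff_eq_zero_of_dvd {d s : ℕ} {g : R d} {n : Idx d →₀ ℕ}
    (hdvd : β d ^ s ∣ g) (hn : n (Sum.inl ()) < s) :
    MvPowerSeries.coeff n g = 0 := by
  obtain ⟨h, rfl⟩ := hdvd
  rw [coeff_beta_pow_mul, if_neg (by omega)]

lemma coeff_seriesSum (d : ℕ) (f : ℕ → R d) (n : Idx d →₀ ℕ) :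
    MvPowerSeries.coeff n (seriesSum d f)
      = ∑ s ∈ Finset.range (n (Sum.inl ()) + 1), MvPowerSeries.coeff n (f s) := rfl

lemma coeff_seriesSum_of_dvd {d : ℕ} {f : ℕ → R d} (hf : ∀ s, β d ^ s ∣ f s)
    (n : Idx d →₀ ℕ) {N : ℕ} (hN : n (Sum.inl ()) < N) :
    MvPowerSeries.coeff n (seriesSum d f)
      = ∑ s ∈ Finset.range N, MvPowerSeries.coeff n (f s) := by
  rw [coeff_seriesSum]
  refine Finset.sum_subset (Finset.range_subset_range.2 (by omega)) ?_
  intro s _ hs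
  simp only [Finset.mem_range, not_lt] at hs
  exact coeff_eq_zero_of_dvd (hf s) (by omega)

lemma coeff_shift (d : ℕ) (g : R d) (r s : ℕ) (n : Idx d →₀ ℕ)
    (hr : r ≤ n (Sum.inl ())) :
    MvPowerSeries.coeff (n - Finsupp.single (Sum.inl ()) r) (β d ^ s * g)
      = MvPowerSeries.coeff n (β d ^ (r + s) * g) := by
  rw [coeff_beta_pow_mul, coeff_beta_pow_mul]
  have h1 : (n - Finsupp.single (Sum.inl () : Idx d) r) (Sum.inl ()) = n (Sum.inl ()) - r := by
    simp [Finsupp.tsub_apply]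
  rw [h1]
  by_cases h : r + s ≤ n (Sum.inl ())
  · rw [if_pos (by omega), if_pos h, tsub_tsub, ← Finsupp.single_add]
  · rw [if_neg (by omega), if_neg h]

/-- The basic building block `S c m = ∑ₛ C(c,s) βˢ G_{m+s}`. -/
noncomputable def S (d k : ℕ) (c m : ℤ) : R d :=
  seriesSum d fun s => Ring.choose c s • (β d ^ s * G d k (m + s))

lemma S_dvd (d k : ℕ) (c m : ℤ) (s : ℕ) :
    β d ^ s ∣ Ring.choose c s • (β d ^ s * G d k (m + s)) :=
  ⟨Ring.choose c s • G d k (m + s), (mul_smul_comm _ _ _).symm⟩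

lemma S_succ (d k : ℕ) (c m : ℤ) :
    S d k (c + 1) m = S d k c m + β d * S d k c (m + 1) := by
  ext n
  set ν := n (Sum.inl ()) with hν
  rw [map_add, S, S, coeff_seriesSum, coeff_seriesSum, ← hν]
  have hβ : MvPowerSeries.coeff n (β d * S d k c (m + 1))
      = ∑ s ∈ Finset.range ν, Ring.choose c s *
          MvPowerSeries.coeff n (β d ^ (s + 1) * G d k (m + (s + 1 : ℕ))) := by
    rw [show β d * S d k c (m + 1) = β d ^ 1 * S d k c (m + 1) by rw [pow_one]]
    rw [coeff_beta_pow_mul]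
    by_cases h1 : 1 ≤ ν
    · rw [if_pos (by omega)]
      have hsub : (n - Finsupp.single (Sum.inl ()) 1 : Idx d →₀ ℕ) (Sum.inl ()) = ν - 1 := by
        rw [Finsupp.tsub_apply, Finsupp.single_eq_same, hν]
      rw [S, coeff_seriesSum_of_dvd (S_dvd d k c (m + 1)) _ (N := ν) (by rw [hsub]; omega)]
      refine Finset.sum_congr rfl fun s _ => ?_
      rw [map_smul, smul_eq_mul]
      have harg : m + 1 + (s : ℤ) = m + ((s + 1 : ℕ) : ℤ) := by push_cast; ring
      rw [harg, coeff_shift d _ 1 s n (by omega), add_comm 1 s]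
    · rw [if_neg (by omega)]
      have hν0 : ν = 0 := by omega
      rw [hν0]
      simp
  rw [hβ]
  have hs : ∀ (r : ℤ) (g : R d), MvPowerSeries.coeff n (r • g) = r * MvPowerSeries.coeff n g :=
    fun r g => by rw [map_smul, smul_eq_mul]
  simp only [hs]
  rw [Finset.sum_range_succ' (fun s => Ring.choose (c + 1) s *
        MvPowerSeries.coeff n (β d ^ s * G d k (m + s))) ν,
      Finset.sum_range_succ' (fun s => Ring.choose c s *
        MvPowerSeries.coeff n (β d ^ s * G d k (m + s))) ν]
  simp only [Ring.choose_succ_succ, add_mul, Finset.sum_add_distrib, Ring.choose_zero_right,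
    Nat.cast_zero, one_mul]
  ring

lemma pascal_sum {M : Type*} [AddCommMonoid M] [Module ℤ M] (t : ℕ) (u : ℕ → M) :
    (∑ r ∈ Finset.range (t + 1), ((t.choose r : ℤ)) • u r)
      + ∑ r ∈ Finset.range (t + 1), ((t.choose r : ℤ)) • u (r + 1)
      = ∑ r ∈ Finset.range (t + 2), (((t + 1).choose r : ℤ)) • u r := by
  rw [Finset.sum_range_succ' (fun r => (((t + 1).choose r : ℤ)) • u r) (t + 1),
      Finset.sum_range_succ' (fun r => ((t.choose r : ℤ)) • u r) t]
  have h0 : ∑ r ∈ Finset.range t, ((t.choose (r + 1) : ℤ)) • u (r + 1)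
      = ∑ r ∈ Finset.range (t + 1), ((t.choose (r + 1) : ℤ)) • u (r + 1) := by
    rw [Finset.sum_range_succ, Nat.choose_succ_self]
    simp
  rw [h0]
  simp only [Nat.choose_succ_succ, Nat.cast_add, add_smul, Finset.sum_add_distrib,
    Nat.choose_zero_right, Nat.cast_one, one_smul]
  abel

lemma S_expand (d k : ℕ) (c : ℤ) (t : ℕ) (m : ℤ) :
    S d k (c + t) m
      = ∑ r ∈ Finset.range (t + 1), ((t.choose r : ℤ)) • (β d ^ r * S d k c (m + r)) := by
  induction t generalizing m with
  | zero => simp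
  | succ t ih =>
      have h1 : (c + ((t + 1 : ℕ) : ℤ)) = (c + t) + 1 := by push_cast; ring
      rw [h1, S_succ, ih m, ih (m + 1)]
      have h2 : β d * ∑ r ∈ Finset.range (t + 1),
            ((t.choose r : ℤ)) • (β d ^ r * S d k c (m + 1 + r))
          = ∑ r ∈ Finset.range (t + 1),
            ((t.choose r : ℤ)) • (β d ^ (r + 1) * S d k c (m + (r + 1 : ℕ))) := by
        rw [Finset.mul_sum]
        refine Finset.sum_congr rfl fun r _ => ?_
        rw [mul_smul_comm]
        congr 1
        have harg : m + 1 + (r : ℤ) = m + ((r + 1 : ℕ) : ℤ) := by push_cast; ring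
        rw [harg]
        ring
      rw [h2]
      exact pascal_sum t (fun r => β d ^ r * S d k c (m + r))

end Aux

/-- The two Jacobi–Trudi type determinants, with binomial coefficients `C(i-d, s)` and
`C(i-j, s)` respectively, agree. -/
theorem grothendieck_det_HM_eq_HIMN
    (d : ℕ) (a : Fin d → ℤ) (ha : ∀ i : Fin d, 0 ≤ a i + d - ((i : ℕ) + 1)) :
    Matrix.det (Matrix.of fun i j : Fin d =>
        seriesSum d fun s =>
          Ring.choose (((i : ℕ) : ℤ) + 1 - d) s •
            (β d ^ s * G d (a i + d - ((i : ℕ) + 1)).toNat (a i + (j : ℕ) - (i : ℕ) + s)))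
      = Matrix.det (Matrix.of fun i j : Fin d =>
          seriesSum d fun s =>
            Ring.choose (((i : ℕ) : ℤ) - ((j : ℕ) : ℤ)) s •
              (β d ^ s *
                G d (a i + d - ((i : ℕ) + 1)).toNat (a i + (j : ℕ) - (i : ℕ) + s))) := by
  classical
  set kk : Fin d → ℕ := fun i => (a i + d - ((i : ℕ) + 1)).toNat with hkk
  set c : Fin d → ℤ := fun i => ((i : ℕ) : ℤ) + 1 - d with hc
  set M : Matrix (Fin d) (Fin d) (R d) :=
    Matrix.of fun i j => S d (kk i) (c i) (a i + (j : ℕ) - (i : ℕ)) with hM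
  set T : Matrix (Fin d) (Fin d) (R d) := (Matrix.of fun j' j =>
    if (j : ℕ) ≤ (j' : ℕ) then
      (((d - 1 - (j : ℕ)).choose ((j' : ℕ) - (j : ℕ)) : ℤ)) • (β d ^ ((j' : ℕ) - (j : ℕ)))
    else 0) with hT
  have hN : (Matrix.of fun i j : Fin d =>
      seriesSum d fun s => Ring.choose (((i : ℕ) : ℤ) - ((j : ℕ) : ℤ)) s •
        (β d ^ s * G d (a i + d - ((i : ℕ) + 1)).toNat (a i + (j : ℕ) - (i : ℕ) + s)))
      = M * T := by
    refine Matrix.ext fun i j => ?_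
    have hj : (j : ℕ) < d := j.isLt
    have hcij : ((i : ℕ) : ℤ) - ((j : ℕ) : ℤ) = c i + ((d - 1 - (j : ℕ) : ℕ) : ℤ) := by
      simp only [hc]
      omega
    show S d (kk i) (((i : ℕ) : ℤ) - ((j : ℕ) : ℤ)) (a i + (j : ℕ) - (i : ℕ)) = _
    rw [hcij, S_expand, Matrix.mul_apply]
    have h3 : ∀ j' : Fin d, M i j' * T j' j
        = (fun nn => if (j : ℕ) ≤ nn then
            (((d - 1 - (j : ℕ)).choose (nn - (j : ℕ)) : ℤ)) •
              (S d (kk i) (c i) (a i + (nn : ℤ) - (i : ℕ)) * β d ^ (nn - (j : ℕ)))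
          else 0) ((j' : ℕ)) := by
      intro j'
      simp only [hM, hT, Matrix.of_apply]
      split_ifs
      · rw [mul_smul_comm]
      · rw [mul_zero]
    rw [Finset.sum_congr rfl fun j' _ => h3 j',
        Fin.sum_univ_eq_sum_range (fun nn => if (j : ℕ) ≤ nn then
            (((d - 1 - (j : ℕ)).choose (nn - (j : ℕ)) : ℤ)) •
              (S d (kk i) (c i) (a i + (nn : ℤ) - (i : ℕ)) * β d ^ (nn - (j : ℕ)))
          else 0) d,
        ← Finset.sum_filter]
    have hfilter : (Finset.range d).filter (fun nn => (j : ℕ) ≤ nn)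
        = Finset.Ico (j : ℕ) d := by
      ext nn
      simp only [Finset.mem_filter, Finset.mem_range, Finset.mem_Ico]
      omega
    rw [hfilter, Finset.sum_Ico_eq_sum_range,
        show d - (j : ℕ) = (d - 1 - (j : ℕ)) + 1 by omega]
    refine Finset.sum_congr rfl fun r _ => ?_
    rw [Nat.add_sub_cancel_left]
    congr 1
    rw [mul_comm]
    congr 2
    push_cast
    ring
  have hT0 : T.BlockTriangular OrderDual.toDual := by
    intro i j hij
    have hij' : i < j := hij
    simp only [hT, Matrix.of_apply]
    rw [if_neg (by exact_mod_cast not_le.2 hij')]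
  have hTdet : T.det = 1 := by
    rw [Matrix.det_of_lowerTriangular T hT0]
    refine Finset.prod_eq_one fun j _ => ?_
    simp [hT]
  have hMeq : (Matrix.of fun i j : Fin d =>
      seriesSum d fun s => Ring.choose (((i : ℕ) : ℤ) + 1 - d) s •
        (β d ^ s * G d (a i + d - ((i : ℕ) + 1)).toNat (a i + (j : ℕ) - (i : ℕ) + s)))
      = M := rfl
  rw [hMeq, hN, Matrix.det_mul, hTdet, mul_one]

end GrothDet
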